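/- Let A∨ be a face of the dual arrangement H∨ and B a face of H, and let π : V* → V*⧸span(A∨) be the quotient by the linear span of A∨. Then there exists a subset K of V*⧸span(A∨) that is closed, convex, and stable under multiplication by positive real scalars, such that: (i) for every face B∨ of H∨ with A∨ ≤ B∨, one has B ⊆ U(B∨) if and only if π(B∨) ⊆ K; and (ii) K is the whole quotient space V*⧸span(A∨) if and only if B ⊆ V(A∨). -/

import Mathlib

/-! Basic notions for a (central, essential) arrangement of hyperplanes `H`
in a finite-dimensional real vector space, its faces, flats, the dual
arrangement and its faces, and the big/small dual cones. -/

/-- Two points `x`, `y` lie in the same face of the hyperplane arrangement `H`: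
for every hyperplane `W ∈ H` and every linear functional `f` with kernel `W`,
either `f x · f y > 0` or `f x = f y = 0`. -/
def SameFace {V : Type*} [AddCommGroup V] [Module ℝ V]
    (H : Finset (Submodule ℝ V)) (x y : V) : Prop :=
  ∀ W ∈ H, ∀ f : V →ₗ[ℝ] ℝ, LinearMap.ker f = W →
    (0 < f x * f y ∨ (f x = 0 ∧ f y = 0))

/-- A face of the arrangement `H`: an equivalence class of the relation `SameFace`. -/
def IsFace {V : Type*} [AddCommGroup V] [Module ℝ V]
    (H : Finset (Submodule ℝ V)) (A : Set V) : Prop :=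
  ∃ x : V, A = {y | SameFace H x y}

/-- A chamber is an open face. -/
def IsChamber {V : Type*} [AddCommGroup V] [Module ℝ V] [TopologicalSpace V]
    (H : Finset (Submodule ℝ V)) (A : Set V) : Prop :=
  IsFace H A ∧ IsOpen A

/-- A flat of `H`: an intersection of a subfamily of the hyperplanes
(the empty subfamily gives all of `V`). -/
def IsFlat {V : Type*} [AddCommGroup V] [Module ℝ V]
    (H : Finset (Submodule ℝ V)) (L : Submodule ℝ V) : Prop :=
  ∃ J : Finset (Submodule ℝ V), J ⊆ H ∧ L = J.inf id

/-- Two (continuous) linear functionals `f`, `g` lie in the same face of the dual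
arrangement `H∨`: for every 1-dimensional flat `l` of `H` and every `x ∈ l`,
either `f x · g x > 0` or `f x = g x = 0`. -/
def DualSameFace {V : Type*} [NormedAddCommGroup V] [NormedSpace ℝ V]
    (H : Finset (Submodule ℝ V)) (f g : V →L[ℝ] ℝ) : Prop :=
  ∀ l : Submodule ℝ V, IsFlat H l → Module.finrank ℝ l = 1 →
    ∀ x ∈ l, (0 < f x * g x ∨ (f x = 0 ∧ g x = 0))

/-- A face of the dual arrangement `H∨` in the dual space. -/
def IsDualFace {V : Type*} [NormedAddCommGroup V] [NormedSpace ℝ V]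
    (H : Finset (Submodule ℝ V)) (A : Set (V →L[ℝ] ℝ)) : Prop :=
  ∃ f : V →L[ℝ] ℝ, A = {g | DualSameFace H f g}

/-- A chamber of the dual arrangement: an open dual face. -/
def IsDualChamber {V : Type*} [NormedAddCommGroup V] [NormedSpace ℝ V]
    (H : Finset (Submodule ℝ V)) (A : Set (V →L[ℝ] ℝ)) : Prop :=
  IsDualFace H A ∧ IsOpen A

/-- The big dual cone `U(A∨)` of a dual face `A∨`. -/
def bigCone {V : Type*} [NormedAddCommGroup V] [NormedSpace ℝ V]
    (A : Set (V →L[ℝ] ℝ)) : Set V :=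
  {x | ∀ f ∈ A, 0 ≤ f x}

/-- The small dual cone `V(A∨)` of a dual face `A∨`: the intersection of the big
dual cones of all dual chambers `B∨` with `A∨ ≤ B∨`. -/
def smallCone {V : Type*} [NormedAddCommGroup V] [NormedSpace ℝ V]
    (H : Finset (Submodule ℝ V)) (A : Set (V →L[ℝ] ℝ)) : Set V :=
  ⋂ B ∈ {B : Set (V →L[ℝ] ℝ) | IsDualChamber H B ∧ A ⊆ closure B}, bigCone B


namespace St5

open Module Set


open Module Set

variable {V : Type*} [NormedAddCommGroup V] [NormedSpace ℝ V]

/-- Two nonzero functionals with equal kernel are proportional. -/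
lemma ker_prop {f g : V →ₗ[ℝ] ℝ} (hg : g ≠ 0) (h : LinearMap.ker f = LinearMap.ker g) :
    ∃ c : ℝ, c ≠ 0 ∧ f = c • g := by
  obtain ⟨v, hv⟩ : ∃ v, g v ≠ 0 := by
    by_contra hc
    push_neg at hc
    exact hg (LinearMap.ext fun u => by simp [hc u])
  refine ⟨f v / g v, ?_, ?_⟩
  · intro h0
    have hfv : f v = 0 := by
      rcases div_eq_zero_iff.1 h0 with h0 | h0
      · exact h0
      · exact absurd h0 hv
    have : v ∈ LinearMap.ker f := hfv
    rw [h] at this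
    exact hv this
  · apply LinearMap.ext
    intro u
    have hmem : u - (g u / g v) • v ∈ LinearMap.ker g := by
      simp [LinearMap.mem_ker, map_sub, map_smul, div_mul_cancel₀ _ hv]
    rw [← h] at hmem
    have hfu : f u - (g u / g v) * f v = 0 := by
      simpa [map_sub, map_smul, smul_eq_mul] using hmem
    have : f u = (g u / g v) * f v := by linarith
    rw [this]
    simp [smul_eq_mul]
    ring

/-- The closed cone associated to the face of `x₀`. -/
def Bbar (H : Finset (Submodule ℝ V)) (x₀ : V) : Set V :=
  {x | ∀ W ∈ H, ∀ f : V →ₗ[ℝ] ℝ, LinearMap.ker f = W →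
    (0 ≤ f x₀ * f x ∧ (f x₀ = 0 → f x = 0))}

lemma sameFace_refl (H : Finset (Submodule ℝ V)) (x₀ : V) : SameFace H x₀ x₀ := by
  intro W hW f hker
  rcases eq_or_ne (f x₀) 0 with h | h
  · exact Or.inr ⟨h, h⟩
  · exact Or.inl (mul_self_pos.2 h)

lemma mem_Bbar_of_sameFace {H : Finset (Submodule ℝ V)} {x₀ y : V}
    (h : SameFace H x₀ y) : y ∈ Bbar H x₀ := by
  intro W hW f hker
  rcases h W hW f hker with h1 | h1
  · exact ⟨le_of_lt h1, fun h0 => by simp [h0] at h1⟩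
  · exact ⟨by simp [h1.1], fun _ => h1.2⟩

lemma Bbar_ray {H : Finset (Submodule ℝ V)} {x₀ x : V}
    (hx : x ∈ Bbar H x₀) {t : ℝ} (ht : 0 < t) : SameFace H x₀ (x + t • x₀) := by
  intro W hW f hker
  obtain ⟨h1, h2⟩ := hx W hW f hker
  rcases eq_or_ne (f x₀) 0 with h0 | h0
  · exact Or.inr ⟨h0, by simp [map_add, map_smul, h2 h0, h0]⟩
  · left
    have : f x₀ * f (x + t • x₀) = f x₀ * f x + t * (f x₀ * f x₀) := by
      simp [map_add, map_smul]; ring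
    rw [this]
    have : 0 < f x₀ * f x₀ := mul_self_pos.2 h0
    nlinarith

lemma Bbar_smul {H : Finset (Submodule ℝ V)} {x₀ x : V}
    (hx : x ∈ Bbar H x₀) {c : ℝ} (hc : 0 < c) : c • x ∈ Bbar H x₀ := by
  intro W hW f hker
  obtain ⟨h1, h2⟩ := hx W hW f hker
  constructor
  · have : f x₀ * f (c • x) = c * (f x₀ * f x) := by simp [map_smul]; ring
    rw [this]; exact mul_nonneg (le_of_lt hc) h1
  · intro h0; simp [map_smul, h2 h0]

lemma nonneg_of_ray {H : Finset (Submodule ℝ V)} {x₀ x : V} (g : V →L[ℝ] ℝ)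
    (hg : ∀ y, SameFace H x₀ y → 0 ≤ g y) (hx : x ∈ Bbar H x₀) : 0 ≤ g x := by
  by_contra hneg
  push_neg at hneg
  rcases le_or_gt (g x₀) 0 with hc | hc
  · have h1 := hg _ (Bbar_ray hx one_pos)
    simp [map_add, map_smul] at h1
    linarith
  · have ht : 0 < -(g x) / (2 * g x₀) := div_pos (by linarith) (by linarith)
    have h1 := hg _ (Bbar_ray hx ht)
    simp [map_add, map_smul, smul_eq_mul] at h1
    have : g x + -(g x) / (2 * g x₀) * g x₀ = g x / 2 := by
      field_simp; ring
    rw [this] at h1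
    linarith

lemma exists_neg_on_face {H : Finset (Submodule ℝ V)} {x₀ x : V} {g : V →L[ℝ] ℝ}
    (hx : x ∈ Bbar H x₀) (hgx : g x < 0) : ∃ b, SameFace H x₀ b ∧ g b < 0 := by
  by_contra hc
  push_neg at hc
  have : 0 ≤ g x := nonneg_of_ray g (fun y hy => hc y hy) hx
  linarith



open Classical in
noncomputable def eVec (l : Submodule ℝ V) : V :=
  if h : ∃ v ∈ l, v ≠ 0 then h.choose else 0

lemma eVec_spec {l : Submodule ℝ V} (h : l ≠ ⊥) : eVec l ∈ l ∧ eVec l ≠ 0 := by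
  have hex : ∃ v ∈ l, v ≠ 0 := Submodule.exists_mem_ne_zero_of_ne_bot h
  classical
  rw [eVec]
  rw [dif_pos hex]
  exact ⟨hex.choose_spec.1, hex.choose_spec.2⟩

lemma ne_bot_of_finrank_one {l : Submodule ℝ V} [FiniteDimensional ℝ V]
    (h : finrank ℝ l = 1) : l ≠ ⊥ := by
  intro hb
  rw [hb] at h
  simp [finrank_bot] at h

lemma mem_one_dim {l : Submodule ℝ V} [FiniteDimensional ℝ V]
    (h : finrank ℝ l = 1) {x : V} (hx : x ∈ l) : ∃ t : ℝ, x = t • eVec l := by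
  obtain ⟨hmem, hne⟩ := eVec_spec (ne_bot_of_finrank_one h)
  have hspan : Submodule.span ℝ {eVec l} = l := by
    apply Submodule.eq_of_le_of_finrank_le
    · rw [Submodule.span_le, Set.singleton_subset_iff]; exact hmem
    · rw [h, finrank_span_singleton hne]
  rw [← hspan] at hx
  obtain ⟨t, ht⟩ := Submodule.mem_span_singleton.1 hx
  exact ⟨t, ht.symm⟩

/-- The finite set of 1-dimensional flats. -/
lemma oneFlats_finite (H : Finset (Submodule ℝ V)) :
    {l : Submodule ℝ V | IsFlat H l ∧ finrank ℝ l = 1}.Finite := by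
  apply Set.Finite.subset (Set.Finite.image (fun J : Finset (Submodule ℝ V) => J.inf id)
    H.powerset.finite_toSet)
  rintro l ⟨⟨J, hJ, rfl⟩, -⟩
  exact ⟨J, by simpa using hJ, rfl⟩

noncomputable def oneFlats (H : Finset (Submodule ℝ V)) : Finset (Submodule ℝ V) :=
  (oneFlats_finite H).toFinset

lemma mem_oneFlats {H : Finset (Submodule ℝ V)} {l : Submodule ℝ V} :
    l ∈ oneFlats H ↔ IsFlat H l ∧ finrank ℝ l = 1 := by
  simp [oneFlats]


variable {H : Finset (Submodule ℝ V)}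

lemma dualSameFace_iff [FiniteDimensional ℝ V] {f g : V →L[ℝ] ℝ} :
    DualSameFace H f g ↔ ∀ l ∈ oneFlats H,
      (0 < f (eVec l) * g (eVec l) ∨ (f (eVec l) = 0 ∧ g (eVec l) = 0)) := by
  constructor
  · intro h l hl
    obtain ⟨hfl, hrk⟩ := mem_oneFlats.1 hl
    exact h l hfl hrk _ (eVec_spec (ne_bot_of_finrank_one hrk)).1
  · intro h l hfl hrk x hx
    have hl : l ∈ oneFlats H := mem_oneFlats.2 ⟨hfl, hrk⟩
    obtain ⟨t, rfl⟩ := mem_one_dim hrk hx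
    rcases eq_or_ne t 0 with rfl | ht
    · exact Or.inr ⟨by simp, by simp⟩
    · rcases h l hl with h1 | h1
      · left
        have : f (t • eVec l) * g (t • eVec l) = (t * t) * (f (eVec l) * g (eVec l)) := by
          simp [map_smul]; ring
        rw [this]
        exact mul_pos (mul_self_pos.2 ht) h1
      · exact Or.inr ⟨by simp [map_smul, h1.1], by simp [map_smul, h1.2]⟩

lemma dsf_refl (f : V →L[ℝ] ℝ) : DualSameFace H f f := by
  intro l hfl hrk x hx
  rcases eq_or_ne (f x) 0 with h | h
  · exact Or.inr ⟨h, h⟩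
  · exact Or.inl (mul_self_pos.2 h)

lemma eval_continuous (x : V) : Continuous (fun g : V →L[ℝ] ℝ => g x) :=
  (ContinuousLinearMap.apply ℝ ℝ x).continuous

/-- Sign transfer: if `f₀` lies in the closure of the dual face of `g₀` then on points of
1-dimensional flats, every `g` in the dual face of `g₀` has the strict signs of `f₀`. -/
lemma dual_sign {g₀ g f₀ : V →L[ℝ] ℝ} (hg : DualSameFace H g₀ g)
    (hf₀ : f₀ ∈ closure {h : V →L[ℝ] ℝ | DualSameFace H g₀ h})
    {l : Submodule ℝ V} (hl : IsFlat H l) (hrk : Module.finrank ℝ l = 1)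
    {x : V} (hx : x ∈ l) : (0 < f₀ x → 0 < g x) ∧ (f₀ x < 0 → g x < 0) := by
  rcases lt_trichotomy (g₀ x) 0 with hneg | hzero | hpos
  · have hsub : {h : V →L[ℝ] ℝ | DualSameFace H g₀ h} ⊆ {h : V →L[ℝ] ℝ | h x ≤ 0} := by
      intro h hh
      show h x ≤ 0
      rcases hh l hl hrk x hx with h1 | h1
      · nlinarith
      · simp [h1.2]
    have hcl : IsClosed {h : V →L[ℝ] ℝ | h x ≤ 0} :=
      isClosed_le (eval_continuous x) continuous_const
    have hf₀x : f₀ x ≤ 0 := closure_minimal hsub hcl hf₀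
    refine ⟨fun h => absurd h (by linarith), fun h => ?_⟩
    rcases hg l hl hrk x hx with h1 | h1
    · nlinarith
    · exact absurd h1.1 (ne_of_lt hneg)
  · have hsub : {h : V →L[ℝ] ℝ | DualSameFace H g₀ h} ⊆ {h : V →L[ℝ] ℝ | h x = 0} := by
      intro h hh
      rcases hh l hl hrk x hx with h1 | h1
      · rw [hzero] at h1; simp at h1
      · exact h1.2
    have hcl : IsClosed {h : V →L[ℝ] ℝ | h x = 0} :=
      isClosed_eq (eval_continuous x) continuous_const
    have hf₀x : f₀ x = 0 := closure_minimal hsub hcl hf₀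
    exact ⟨fun h => absurd hf₀x (by linarith), fun h => absurd hf₀x (by linarith)⟩
  · have hsub : {h : V →L[ℝ] ℝ | DualSameFace H g₀ h} ⊆ {h : V →L[ℝ] ℝ | 0 ≤ h x} := by
      intro h hh
      show 0 ≤ h x
      rcases hh l hl hrk x hx with h1 | h1
      · nlinarith
      · simp [h1.2]
    have hcl : IsClosed {h : V →L[ℝ] ℝ | 0 ≤ h x} :=
      isClosed_le continuous_const (eval_continuous x)
    have hf₀x : 0 ≤ f₀ x := closure_minimal hsub hcl hf₀
    refine ⟨fun h => ?_, fun h => absurd h (by linarith)⟩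
    rcases hg l hl hrk x hx with h1 | h1
    · nlinarith
    · exact absurd h1.1 (by linarith)

lemma span_vanish {f₀ : V →L[ℝ] ℝ} {l : Submodule ℝ V} (hl : IsFlat H l)
    (hrk : Module.finrank ℝ l = 1) {x : V} (hx : x ∈ l) (h0 : f₀ x = 0) :
    ∀ s ∈ Submodule.span ℝ {g : V →L[ℝ] ℝ | DualSameFace H f₀ g}, s x = 0 := by
  intro s hs
  have hle : Submodule.span ℝ {g : V →L[ℝ] ℝ | DualSameFace H f₀ g} ≤
      LinearMap.ker ((ContinuousLinearMap.apply ℝ ℝ x : (V →L[ℝ] ℝ) →ₗ[ℝ] ℝ)) := by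
    rw [Submodule.span_le]
    intro g hg
    rcases hg l hl hrk x hx with h1 | h1
    · rw [h0] at h1; simp at h1
    · simpa [LinearMap.mem_ker] using h1.2
  simpa [LinearMap.mem_ker] using hle hs

lemma exists_nonvanishing (s : Finset V) :
    (∀ v ∈ s, v ≠ 0) → ∃ h : V →L[ℝ] ℝ, ∀ v ∈ s, h v ≠ 0 := by
  classical
  induction s using Finset.induction_on with
  | empty => exact fun _ => ⟨0, by simp⟩
  | @insert v s hv ih =>
    intro hs
    obtain ⟨h, hh⟩ := ih (fun u hu => hs u (Finset.mem_insert_of_mem hu))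
    have hv0 : v ≠ 0 := hs v (Finset.mem_insert_self v s)
    obtain ⟨g, hg1, hgv⟩ := exists_dual_vector ℝ v (norm_ne_zero_iff.2 hv0)
    have hgv0 : g v ≠ 0 := by
      rw [hgv]
      simpa using norm_ne_zero_iff.2 hv0
    have hbad : {c : ℝ | ∃ u ∈ insert v s, h u + c * g u = 0}.Finite := by
      apply Set.Finite.subset ((insert v s).finite_toSet.image fun u => -(h u) / (g u))
      rintro c ⟨u, hu, huc⟩
      have hgu : g u ≠ 0 := by
        intro hgu0
        rw [hgu0] at huc
        simp at huc
        rcases Finset.mem_insert.1 hu with rfl | hu'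
        · exact hgv0 hgu0
        · exact hh u hu' huc
      refine ⟨u, by simpa using hu, ?_⟩
      field_simp
      linarith
    obtain ⟨c, hc⟩ := hbad.exists_notMem
    refine ⟨h + c • g, fun u hu h0 => hc ⟨u, hu, ?_⟩⟩
    simpa [smul_eq_mul] using h0

/-- Evaluation at `x`, descended to the quotient by `span A` (or `0` if not well defined). -/
noncomputable def evQ (A : Set (V →L[ℝ] ℝ)) (x : V) :
    ((V →L[ℝ] ℝ) ⧸ Submodule.span ℝ A) →ₗ[ℝ] ℝ := by
  classical
  exact if h : Submodule.span ℝ A ≤ LinearMap.ker ((ContinuousLinearMap.apply ℝ ℝ x : (V →L[ℝ] ℝ) →ₗ[ℝ] ℝ))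
  then (Submodule.span ℝ A).liftQ ((ContinuousLinearMap.apply ℝ ℝ x) : (V →L[ℝ] ℝ) →ₗ[ℝ] ℝ) h
  else 0

lemma evQ_mk {A : Set (V →L[ℝ] ℝ)} {x : V}
    (h : ∀ s ∈ Submodule.span ℝ A, s x = 0) (g : V →L[ℝ] ℝ) :
    evQ A x ((Submodule.span ℝ A).mkQ g) = g x := by
  classical
  have h' : Submodule.span ℝ A ≤ LinearMap.ker ((ContinuousLinearMap.apply ℝ ℝ x : (V →L[ℝ] ℝ) →ₗ[ℝ] ℝ)) :=
    fun s hs => by simpa [LinearMap.mem_ker] using h s hs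
  rw [evQ]
  rw [dif_pos h']
  simp [Submodule.mkQ_apply]

/-- Key geometric lemma, via Krein–Milman: a continuous functional that is nonnegative
on all points of `Bbar H x₀` lying in 1-dimensional flats is nonnegative on `Bbar H x₀`. -/
lemma nonneg_on_Bbar [FiniteDimensional ℝ V] (H : Finset (Submodule ℝ V))
    (hHyp : ∀ W ∈ H, ∃ f : V →ₗ[ℝ] ℝ, f ≠ 0 ∧ LinearMap.ker f = W)
    (hEss : (⋂ W ∈ H, (W : Set V)) = {0})
    (x₀ : V) (g : V →L[ℝ] ℝ)
    (hg : ∀ x ∈ Bbar H x₀,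
      (∃ l, IsFlat H l ∧ Module.finrank ℝ l = 1 ∧ x ∈ l) → 0 ≤ g x) :
    ∀ x ∈ Bbar H x₀, 0 ≤ g x := by
  classical
  choose fW hfW0 hfWker using hHyp
  have hBeq : Bbar H x₀ = ⋂ (f : V →ₗ[ℝ] ℝ) (_ : LinearMap.ker f ∈ H),
      {x : V | 0 ≤ f x₀ * f x ∧ (f x₀ = 0 → f x = 0)} := by
    ext x
    simp only [Set.mem_iInter, Set.mem_setOf_eq, Bbar]
    constructor
    · intro hx f hf; exact hx _ hf f rfl
    · intro hx W hW f hker; exact hx f (by rw [hker]; exact hW)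
  have hBclosed : IsClosed (Bbar H x₀) := by
    rw [hBeq]
    refine isClosed_iInter fun f => isClosed_iInter fun hf => ?_
    have hfc : Continuous f := f.continuous_of_finiteDimensional
    have heq : {x : V | 0 ≤ f x₀ * f x ∧ (f x₀ = 0 → f x = 0)}
        = {x : V | 0 ≤ f x₀ * f x} ∩ {x : V | f x₀ = 0 → f x = 0} := rfl
    rw [heq]
    apply IsClosed.inter
    · exact isClosed_le continuous_const (continuous_const.mul hfc)
    · by_cases h0 : f x₀ = 0
      · have : {x : V | f x₀ = 0 → f x = 0} = {x : V | f x = 0} := by ext w; simp [h0]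
        rw [this]
        exact isClosed_eq hfc continuous_const
      · have : {x : V | f x₀ = 0 → f x = 0} = Set.univ := by ext w; simp [h0]
        rw [this]
        exact isClosed_univ
  have hBconv : Convex ℝ (Bbar H x₀) := by
    rw [hBeq]
    refine convex_iInter fun f => convex_iInter fun hf => ?_
    intro p hp q hq a b ha hb hab
    constructor
    · show 0 ≤ f x₀ * f (a • p + b • q)
      simp only [map_add, map_smul, smul_eq_mul]
      nlinarith [hp.1, hq.1, ha, hb]
    · intro h0
      show f (a • p + b • q) = 0
      simp only [map_add, map_smul, smul_eq_mul, hp.2 h0, hq.2 h0]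
      ring
  intro x hx
  rcases eq_or_ne x 0 with rfl | hx0
  · simp
  set hfun : V →ₗ[ℝ] ℝ := ∑ W ∈ H.attach, (fW W.1 W.2 x₀) • fW W.1 W.2 with hhdef
  have hfun_apply : ∀ z, hfun z = ∑ W ∈ H.attach, (fW W.1 W.2 x₀) * (fW W.1 W.2 z) := by
    intro z
    rw [hhdef]
    simp [LinearMap.sum_apply, LinearMap.smul_apply, smul_eq_mul]
  have hfc : Continuous hfun := hfun.continuous_of_finiteDimensional
  have hBB : ∀ z ∈ Bbar H x₀, ∀ (W) (hW : W ∈ H),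
      0 ≤ fW W hW x₀ * fW W hW z ∧ (fW W hW x₀ = 0 → fW W hW z = 0) :=
    fun z hz W hW => hz W hW _ (hfWker W hW)
  have hfun_nonneg : ∀ z ∈ Bbar H x₀, 0 ≤ hfun z := by
    intro z hz
    rw [hfun_apply]
    exact Finset.sum_nonneg fun W _ => (hBB z hz W.1 W.2).1
  have hfun_pos : ∀ z ∈ Bbar H x₀, z ≠ 0 → 0 < hfun z := by
    intro z hz hz0
    rcases (hfun_nonneg z hz).lt_or_eq with h | h
    · exact h
    exfalso
    have hzero : ∀ W ∈ H.attach, (fW W.1 W.2 x₀) * (fW W.1 W.2 z) = 0 := by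
      refine (Finset.sum_eq_zero_iff_of_nonneg (fun W _ => (hBB z hz W.1 W.2).1)).1 ?_
      rw [← hfun_apply]; exact h.symm
    have hmem : ∀ W ∈ H, z ∈ W := by
      intro W hW
      have h1 := hzero ⟨W, hW⟩ (Finset.mem_attach _ _)
      have h2 : fW W hW z = 0 := by
        rcases mul_eq_zero.1 h1 with h1 | h1
        · exact (hBB z hz W hW).2 h1
        · exact h1
      rw [← hfWker W hW]
      exact h2
    have : z ∈ (⋂ W ∈ H, (W : Set V)) := Set.mem_iInter₂.2 hmem
    rw [hEss] at this
    exact hz0 this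
  set S : Set V := Bbar H x₀ ∩ {z | hfun z = 1} with hSdef
  have hScl : IsClosed S := hBclosed.inter (isClosed_eq hfc continuous_const)
  have hSconv : Convex ℝ S := hBconv.inter (convex_hyperplane hfun.isLinear 1)
  have hSbdd : Bornology.IsBounded S := by
    rcases Set.eq_empty_or_nonempty (Bbar H x₀ ∩ Metric.sphere 0 1) with hT | hT
    · have hSe : S = ∅ := by
        rw [Set.eq_empty_iff_forall_notMem]
        intro z hz
        have hz0 : z ≠ 0 := by
          intro h0
          have := hz.2
          rw [h0] at this
          simp at this
        have hnz : 0 < ‖z‖ := norm_pos_iff.2 hz0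
        have : (‖z‖⁻¹ • z) ∈ Bbar H x₀ ∩ Metric.sphere 0 1 := by
          refine ⟨Bbar_smul hz.1 (by positivity), ?_⟩
          simp [norm_smul, abs_of_pos (inv_pos.2 hnz), inv_mul_cancel₀ (ne_of_gt hnz)]
        rw [hT] at this
        exact this
      rw [hSe]
      exact Bornology.isBounded_empty
    · obtain ⟨m, hmT, hmin⟩ :=
        ((isCompact_sphere (0:V) 1).inter_left hBclosed).exists_isMinOn hT hfc.continuousOn
      have hm0 : m ≠ 0 := by
        intro h0
        have := hmT.2
        rw [h0] at this
        simp at this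
      have hm : 0 < hfun m := hfun_pos m hmT.1 hm0
      apply Bornology.IsBounded.subset (Metric.isBounded_closedBall (x := (0:V)) (r := (hfun m)⁻¹))
      intro z hz
      have hz0 : z ≠ 0 := by
        intro h0
        have := hz.2
        rw [h0] at this
        simp at this
      have hnz : 0 < ‖z‖ := norm_pos_iff.2 hz0
      have hmem : (‖z‖⁻¹ • z) ∈ Bbar H x₀ ∩ Metric.sphere 0 1 := by
        refine ⟨Bbar_smul hz.1 (by positivity), ?_⟩
        simp [norm_smul, abs_of_pos (inv_pos.2 hnz), inv_mul_cancel₀ (ne_of_gt hnz)]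
      have hle : hfun m ≤ hfun (‖z‖⁻¹ • z) := isMinOn_iff.1 hmin _ hmem
      have hz1 : hfun z = 1 := hz.2
      rw [map_smul, smul_eq_mul, hz1, mul_one] at hle
      have : ‖z‖ ≤ (hfun m)⁻¹ := by
        rw [← inv_inv ‖z‖]
        exact inv_anti₀ hm hle
      simpa [Metric.mem_closedBall, dist_zero_right] using this
  have hScomp : IsCompact S := Metric.isCompact_of_isClosed_isBounded hScl hSbdd
  have hKM := closure_convexHull_extremePoints hScomp hSconv
  have mem_Bbar_of : ∀ w : V, (∀ (W) (hW : W ∈ H),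
      0 ≤ fW W hW x₀ * fW W hW w ∧ (fW W hW x₀ = 0 → fW W hW w = 0)) → w ∈ Bbar H x₀ := by
    intro w hw W hW f hker
    obtain ⟨c, hc0, rfl⟩ := ker_prop (hfW0 W hW) (hker.trans (hfWker W hW).symm)
    obtain ⟨h1, h2⟩ := hw W hW
    constructor
    · show 0 ≤ (c • fW W hW) x₀ * (c • fW W hW) w
      simp only [LinearMap.smul_apply, smul_eq_mul]
      nlinarith [mul_self_nonneg c, h1]
    · intro h0
      simp only [LinearMap.smul_apply, smul_eq_mul] at h0 ⊢
      rcases mul_eq_zero.1 h0 with h | h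
      · exact absurd h hc0
      · rw [h2 h]
        ring
  have hext : Set.extremePoints ℝ S ⊆ {z | 0 ≤ g z} := by
    intro z hz
    obtain ⟨hzS, hzext⟩ := mem_extremePoints.1 hz
    have hz1 : hfun z = 1 := hzS.2
    have hz0 : z ≠ 0 := by
      intro h0
      rw [h0] at hz1
      simp at hz1
    set J : Finset (Submodule ℝ V) := H.filter (fun W => z ∈ W) with hJdef
    set L : Submodule ℝ V := J.inf id with hLdef
    have hzL : z ∈ L := Submodule.mem_finsetInf.2 fun W hW => (Finset.mem_filter.1 hW).2
    have hLflat : IsFlat H L := ⟨J, Finset.filter_subset _ _, rfl⟩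
    by_cases hrk : Module.finrank ℝ L = 1
    · exact hg z hzS.1 ⟨L, hLflat, hrk, hzL⟩
    exfalso
    have hspanle : Submodule.span ℝ {z} ≤ L := by
      rw [Submodule.span_le]
      simpa using hzL
    have h1 : Module.finrank ℝ (Submodule.span ℝ {z}) = 1 := finrank_span_singleton hz0
    have hlt : Submodule.span ℝ {z} < L := by
      apply Submodule.lt_of_le_of_finrank_lt_finrank hspanle
      rw [h1]
      have hge : 1 ≤ Module.finrank ℝ L := h1 ▸ Submodule.finrank_mono hspanle
      omega
    obtain ⟨y, hyL, hynot⟩ := SetLike.exists_of_lt hlt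
    set y' : V := y - (hfun y) • z with hy'def
    have hy'L : y' ∈ L := L.sub_mem hyL (L.smul_mem _ hzL)
    have hy'0 : y' ≠ 0 := by
      intro h0
      apply hynot
      rw [Submodule.mem_span_singleton]
      exact ⟨hfun y, (sub_eq_zero.1 h0).symm⟩
    have hfy' : hfun y' = 0 := by
      rw [hy'def]
      simp [map_sub, map_smul, hz1, smul_eq_mul]
    have hW_event : ∀ W : {w // w ∈ H}, ∀ᶠ ε in nhds (0:ℝ),
        (0 ≤ fW W.1 W.2 x₀ * fW W.1 W.2 (z + ε • y') ∧
          (fW W.1 W.2 x₀ = 0 → fW W.1 W.2 (z + ε • y') = 0)) ∧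
        (0 ≤ fW W.1 W.2 x₀ * fW W.1 W.2 (z - ε • y') ∧
          (fW W.1 W.2 x₀ = 0 → fW W.1 W.2 (z - ε • y') = 0)) := by
      intro W
      by_cases hzW : z ∈ W.1
      · have hfz : fW W.1 W.2 z = 0 := by
          rw [← LinearMap.mem_ker, hfWker W.1 W.2]
          exact hzW
        have hWJ : W.1 ∈ J := Finset.mem_filter.2 ⟨W.2, hzW⟩
        have hLW : L ≤ W.1 := by
          rw [hLdef]
          exact Finset.inf_le hWJ
        have hfy'0 : fW W.1 W.2 y' = 0 := by
          rw [← LinearMap.mem_ker, hfWker W.1 W.2]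
          exact hLW hy'L
        apply Filter.Eventually.of_forall
        intro ε
        simp [map_add, map_sub, map_smul, hfz, hfy'0, smul_eq_mul]
      · have hfz : fW W.1 W.2 z ≠ 0 := by
          intro hc
          apply hzW
          have : z ∈ LinearMap.ker (fW W.1 W.2) := LinearMap.mem_ker.2 hc
          rwa [hfWker W.1 W.2] at this
        have hx₀W : fW W.1 W.2 x₀ ≠ 0 := fun h0 => hfz ((hBB z hzS.1 W.1 W.2).2 h0)
        have hprod : 0 < fW W.1 W.2 x₀ * fW W.1 W.2 z :=
          lt_of_le_of_ne (hBB z hzS.1 W.1 W.2).1 (Ne.symm (mul_ne_zero hx₀W hfz))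
        have hcW : Continuous (fW W.1 W.2) := (fW W.1 W.2).continuous_of_finiteDimensional
        have hcont1 : Continuous fun ε : ℝ => fW W.1 W.2 x₀ * fW W.1 W.2 (z + ε • y') := by
          apply continuous_const.mul
          exact hcW.comp (continuous_const.add (continuous_id.smul continuous_const))
        have hcont2 : Continuous fun ε : ℝ => fW W.1 W.2 x₀ * fW W.1 W.2 (z - ε • y') := by
          apply continuous_const.mul
          exact hcW.comp (continuous_const.sub (continuous_id.smul continuous_const))
        have hev1 : ∀ᶠ ε in nhds (0:ℝ), 0 < fW W.1 W.2 x₀ * fW W.1 W.2 (z + ε • y') := by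
          exact (hcont1.tendsto 0).eventually (eventually_gt_nhds (by simpa using hprod))
        have hev2 : ∀ᶠ ε in nhds (0:ℝ), 0 < fW W.1 W.2 x₀ * fW W.1 W.2 (z - ε • y') := by
          exact (hcont2.tendsto 0).eventually (eventually_gt_nhds (by simpa using hprod))
        filter_upwards [hev1, hev2] with ε he1 he2
        exact ⟨⟨le_of_lt he1, fun h0 => absurd h0 hx₀W⟩, ⟨le_of_lt he2, fun h0 => absurd h0 hx₀W⟩⟩
    have hall : ∀ᶠ ε in nhds (0:ℝ), ∀ W : {w // w ∈ H},
        (0 ≤ fW W.1 W.2 x₀ * fW W.1 W.2 (z + ε • y') ∧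
          (fW W.1 W.2 x₀ = 0 → fW W.1 W.2 (z + ε • y') = 0)) ∧
        (0 ≤ fW W.1 W.2 x₀ * fW W.1 W.2 (z - ε • y') ∧
          (fW W.1 W.2 x₀ = 0 → fW W.1 W.2 (z - ε • y') = 0)) :=
      Filter.eventually_all.2 hW_event
    obtain ⟨ε, hεmem, hεne⟩ :=
      ((hall.filter_mono nhdsWithin_le_nhds).and self_mem_nhdsWithin).exists
        (f := nhdsWithin (0:ℝ) {0}ᶜ)
    have hεne' : ε ≠ 0 := hεne
    have hSplus : z + ε • y' ∈ S := by
      refine ⟨mem_Bbar_of _ (fun W hW => (hεmem ⟨W, hW⟩).1), ?_⟩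
      show hfun (z + ε • y') = 1
      simp [map_add, map_smul, hfy', hz1, smul_eq_mul]
    have hSminus : z - ε • y' ∈ S := by
      refine ⟨mem_Bbar_of _ (fun W hW => (hεmem ⟨W, hW⟩).2), ?_⟩
      show hfun (z - ε • y') = 1
      simp [map_sub, map_smul, hfy', hz1, smul_eq_mul]
    have hmid : z ∈ openSegment ℝ (z - ε • y') (z + ε • y') := by
      refine ⟨1/2, 1/2, by norm_num, by norm_num, by norm_num, ?_⟩
      module
    have hboth := hzext _ hSminus _ hSplus hmid
    have h0 : ε • y' = 0 := by
      have h1 := hboth.1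
      have : z - ε • y' = z := h1
      have := sub_eq_self.1 this
      exact this
    exact (smul_ne_zero hεne' hy'0) h0
  have hcpos : 0 < hfun x := hfun_pos x hx hx0
  have hw : (hfun x)⁻¹ • x ∈ S := by
    refine ⟨Bbar_smul hx (inv_pos.2 hcpos), ?_⟩
    show hfun ((hfun x)⁻¹ • x) = 1
    simp [map_smul, smul_eq_mul, inv_mul_cancel₀ (ne_of_gt hcpos)]
  have hPclosed : IsClosed {z : V | 0 ≤ g z} := isClosed_le continuous_const g.continuous
  have hPconv : Convex ℝ {z : V | 0 ≤ g z} := by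
    intro p hp q hq a b ha hb hab
    show 0 ≤ g (a • p + b • q)
    simp only [map_add, map_smul, smul_eq_mul]
    simp only [Set.mem_setOf_eq] at hp hq
    nlinarith
  have hsub2 : S ⊆ {z | 0 ≤ g z} := by
    rw [← hKM]
    exact closure_minimal (convexHull_min hext hPconv) hPclosed
  have hfin := hsub2 hw
  simp only [Set.mem_setOf_eq, map_smul, smul_eq_mul] at hfin
  have := mul_nonneg (le_of_lt hcpos) hfin
  rwa [← mul_assoc, mul_inv_cancel₀ (ne_of_gt hcpos), one_mul] at this

set_option maxHeartbeats 1000000 in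
/-- Existence of a dual chamber above the dual face of `f₀` that is negative at a
given nonzero point `x` of a 1-dimensional flat where `f₀ x ≤ 0`. -/
lemma exists_chamber [FiniteDimensional ℝ V] {H : Finset (Submodule ℝ V)} (f₀ : V →L[ℝ] ℝ)
    {l₁ : Submodule ℝ V} (hl₁ : IsFlat H l₁) (hrk₁ : Module.finrank ℝ l₁ = 1)
    {x : V} (hx : x ∈ l₁) (hx0 : x ≠ 0) (hf₀x : f₀ x ≤ 0) :
    ∃ Bf : Set (V →L[ℝ] ℝ), IsDualChamber H Bf ∧
      {g : V →L[ℝ] ℝ | DualSameFace H f₀ g} ⊆ closure Bf ∧ ∃ g ∈ Bf, g x < 0 := by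
  classical
  obtain ⟨h, hh⟩ := exists_nonvanishing ((oneFlats H).image fun l => eVec l)
    (by
      intro v hv
      obtain ⟨l, hl, rfl⟩ := Finset.mem_image.1 hv
      exact (eVec_spec (ne_bot_of_finrank_one (mem_oneFlats.1 hl).2)).2)
  have hhl : ∀ l ∈ oneFlats H, h (eVec l) ≠ 0 :=
    fun l hl => hh _ (Finset.mem_image_of_mem _ hl)
  have hl₁mem : l₁ ∈ oneFlats H := mem_oneFlats.2 ⟨hl₁, hrk₁⟩
  obtain ⟨t, rfl⟩ := mem_one_dim hrk₁ hx
  have ht0 : t ≠ 0 := by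
    rintro rfl
    simp at hx0
  have hhx : h (t • eVec l₁) ≠ 0 := by
    rw [map_smul, smul_eq_mul]
    exact mul_ne_zero ht0 (hhl l₁ hl₁mem)
  set h₁ : V →L[ℝ] ℝ := if h (t • eVec l₁) < 0 then h else -h with hh₁def
  have hh₁l : ∀ l ∈ oneFlats H, h₁ (eVec l) ≠ 0 := by
    intro l hl
    rw [hh₁def]
    split <;> simp [hhl l hl]
  have hh₁x : h₁ (t • eVec l₁) < 0 := by
    rw [hh₁def]
    split
    · assumption
    · rename_i hc
      push_neg at hc
      have : 0 < h (t • eVec l₁) := lt_of_le_of_ne hc (Ne.symm hhx)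
      simpa using this
  -- choose a small positive ε
  have hev : ∀ l ∈ oneFlats H, ∀ᶠ ε in nhds (0:ℝ),
      f₀ (eVec l) ≠ 0 → |ε * h₁ (eVec l)| < |f₀ (eVec l)| := by
    intro l hl
    rcases eq_or_ne (f₀ (eVec l)) 0 with h0 | h0
    · exact Filter.Eventually.of_forall fun ε hne => absurd h0 hne
    · have hpos : (0:ℝ) < |f₀ (eVec l)| := abs_pos.2 h0
      have hcont : Continuous fun ε : ℝ => |ε * h₁ (eVec l)| :=
        (continuous_id.mul continuous_const).abs
      have h00 : |(0:ℝ) * h₁ (eVec l)| < |f₀ (eVec l)| := by simpa using hpos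
      have h01 : (fun ε : ℝ => |ε * h₁ (eVec l)|) 0 < |f₀ (eVec l)| := by simpa using h00
      exact ((hcont.tendsto 0).eventually (eventually_lt_nhds h01)).mono fun ε hε _ => hε
  obtain ⟨ε, hεall, hεpos⟩ :=
    (((Filter.eventually_all_finset (oneFlats H)).2 hev).filter_mono nhdsWithin_le_nhds).and
      (self_mem_nhdsWithin (s := Set.Ioi (0:ℝ)) (a := (0:ℝ)))
      |>.exists
  have hεpos' : (0:ℝ) < ε := hεpos
  set f : V →L[ℝ] ℝ := f₀ + ε • h₁ with hfdef
  have hfe : ∀ l ∈ oneFlats H, f (eVec l) = f₀ (eVec l) + ε * h₁ (eVec l) := by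
    intro l hl
    simp [hfdef, smul_eq_mul]
  have key : ∀ l ∈ oneFlats H,
      (f₀ (eVec l) ≠ 0 → 0 < f (eVec l) * f₀ (eVec l)) ∧
      (f₀ (eVec l) = 0 → f (eVec l) = ε * h₁ (eVec l)) := by
    intro l hl
    constructor
    · intro hne
      have habs := hεall l hl hne
      have h2 := abs_lt.1 habs
      rw [hfe l hl]
      rcases lt_or_gt_of_ne hne with hneg | hpos
      · rw [abs_of_neg hneg] at h2
        nlinarith [h2.1, h2.2]
      · rw [abs_of_pos hpos] at h2
        nlinarith [h2.1, h2.2]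
    · intro h0
      rw [hfe l hl, h0, zero_add]
  have hfne : ∀ l ∈ oneFlats H, f (eVec l) ≠ 0 := by
    intro l hl
    rcases eq_or_ne (f₀ (eVec l)) 0 with h0 | h0
    · rw [(key l hl).2 h0]
      exact mul_ne_zero (ne_of_gt hεpos') (hh₁l l hl)
    · intro hc
      have := (key l hl).1 h0
      rw [hc] at this
      simp at this
  clear_value h₁ f
  refine ⟨{g : V →L[ℝ] ℝ | DualSameFace H f g}, ⟨⟨f, rfl⟩, ?_⟩, ?_, ⟨f, dsf_refl f, ?_⟩⟩
  · -- openness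
    have heq : {g : V →L[ℝ] ℝ | DualSameFace H f g}
        = ⋂ l ∈ oneFlats H, {g : V →L[ℝ] ℝ | 0 < f (eVec l) * g (eVec l)} := by
      ext g
      rw [Set.mem_iInter₂]
      constructor
      · intro hg l hl
        rcases dualSameFace_iff.1 hg l hl with h1 | h1
        · exact h1
        · exact absurd h1.1 (hfne l hl)
      · intro hg
        exact dualSameFace_iff.2 fun l hl => Or.inl (hg l hl)
    rw [heq]
    exact isOpen_biInter_finset fun l hl =>
      isOpen_lt continuous_const (continuous_const.mul (eval_continuous (eVec l)))
  · -- A (the dual face of f₀) is contained in the closure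
    intro a ha
    have hmemt : ∀ s : ℝ, 0 < s → a + s • f ∈ {g : V →L[ℝ] ℝ | DualSameFace H f g} := by
      intro s hs
      apply dualSameFace_iff.2
      intro l hl
      left
      show 0 < f (eVec l) * (a + s • f) (eVec l)
      have happ : (a + s • f) (eVec l) = a (eVec l) + s * f (eVec l) := by
        simp [smul_eq_mul]
      rw [happ]
      rcases eq_or_ne (f₀ (eVec l)) 0 with h0 | h0
      · have hae : a (eVec l) = 0 := by
          rcases dualSameFace_iff.1 ha l hl with h1 | h1
          · rw [h0] at h1
            simp at h1
          · exact h1.2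
        rw [hae, zero_add]
        have hsq' : 0 < f (eVec l) * f (eVec l) := mul_self_pos.2 (hfne l hl)
        linarith [mul_pos hs hsq']
      · have ha1 : 0 < f₀ (eVec l) * a (eVec l) := by
          rcases dualSameFace_iff.1 ha l hl with h1 | h1
          · exact h1
          · exact absurd h1.1 h0
        have hff₀ : 0 < f (eVec l) * f₀ (eVec l) := (key l hl).1 h0
        have h3 : 0 < f (eVec l) * a (eVec l) := by
          rcases mul_pos_iff.1 ha1 with ⟨hp1, hp2⟩ | ⟨hn1, hn2⟩
          · rcases mul_pos_iff.1 hff₀ with ⟨hq1, hq2⟩ | ⟨hq1, hq2⟩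
            · exact mul_pos hq1 hp2
            · exact absurd hp1 (by linarith)
          · rcases mul_pos_iff.1 hff₀ with ⟨hq1, hq2⟩ | ⟨hq1, hq2⟩
            · exact absurd hq2 (by linarith)
            · exact mul_pos_of_neg_of_neg hq1 hn2
        linarith [mul_pos hs (mul_self_pos.2 (hfne l hl)), h3]
    have htd : Filter.Tendsto (fun s : ℝ => a + s • f)
        (nhdsWithin 0 (Set.Ioi (0:ℝ))) (nhds a) := by
      have hcont : Continuous (fun s : ℝ => a + s • f) :=
        continuous_const.add (continuous_id.smul continuous_const)
      have h4 := (hcont.tendsto 0).mono_left (nhdsWithin_le_nhds (s := Set.Ioi (0:ℝ)))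
      simpa using h4
    exact mem_closure_of_tendsto htd
      (Filter.eventually_of_mem self_mem_nhdsWithin fun s hs => hmemt s hs)
  · -- f is negative at x = t • eVec l₁
    have : f (t • eVec l₁) = f₀ (t • eVec l₁) + ε * h₁ (t • eVec l₁) := by
      rw [hfdef]
      simp only [ContinuousLinearMap.add_apply, ContinuousLinearMap.coe_smul', Pi.smul_apply,
        smul_eq_mul]
    rw [this]
    linarith [mul_pos hεpos' (neg_pos.2 hh₁x)]

end St5

/-- For a dual face `A∨` and a face `B` of `H`, there is a closed
convex cone `K` in the quotient `V*⧸span(A∨)` such that, for every dual face `B∨`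
with `A∨ ≤ B∨`, one has `B ⊆ U(B∨)` iff `π(B∨) ⊆ K`; and `K` is the whole quotient
iff `B ⊆ V(A∨)`. -/
theorem statement5 {V : Type*} [NormedAddCommGroup V] [NormedSpace ℝ V]
    [FiniteDimensional ℝ V] (H : Finset (Submodule ℝ V))
    (hHyp : ∀ W ∈ H, ∃ f : V →ₗ[ℝ] ℝ, f ≠ 0 ∧ LinearMap.ker f = W)
    (hEss : (⋂ W ∈ H, (W : Set V)) = {0})
    (A : Set (V →L[ℝ] ℝ)) (hA : IsDualFace H A)
    (B : Set V) (hB : IsFace H B) :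
    ∃ K : Set ((V →L[ℝ] ℝ) ⧸ Submodule.span ℝ A),
      IsClosed K ∧ Convex ℝ K ∧
      (∀ c : ℝ, 0 < c → ∀ x ∈ K, c • x ∈ K) ∧
      (∀ B' : Set (V →L[ℝ] ℝ), IsDualFace H B' → A ⊆ closure B' →
        (B ⊆ bigCone B' ↔ (Submodule.span ℝ A).mkQ '' B' ⊆ K)) ∧
      (K = Set.univ ↔ B ⊆ smallCone H A) := by
  classical
  obtain ⟨f₀, rfl⟩ := hA
  obtain ⟨x₀, rfl⟩ := hB
  set A : Set (V →L[ℝ] ℝ) := {g | DualSameFace H f₀ g} with hAdef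
  haveI : IsClosed ((Submodule.span ℝ A : Submodule ℝ (V →L[ℝ] ℝ)) : Set (V →L[ℝ] ℝ)) :=
    Submodule.closed_of_finiteDimensional _
  set R : Set V :=
    {x | x ∈ St5.Bbar H x₀ ∧ ∃ l, IsFlat H l ∧ Module.finrank ℝ l = 1 ∧ x ∈ l} with hRdef
  have hvanish : ∀ x ∈ R, f₀ x = 0 → ∀ s ∈ Submodule.span ℝ A, s x = 0 := by
    intro x hx h0
    obtain ⟨l, hl, hrk, hxl⟩ := hx.2
    exact St5.span_vanish hl hrk hxl h0
  have hevQmk : ∀ x ∈ R, f₀ x = 0 → ∀ g : V →L[ℝ] ℝ,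
      St5.evQ A x ((Submodule.span ℝ A).mkQ g) = g x :=
    fun x hx h0 g => St5.evQ_mk (hvanish x hx h0) g
  have hBig : ∀ g : V →L[ℝ] ℝ, (∀ x ∈ R, 0 ≤ g x) → ∀ y, SameFace H x₀ y → 0 ≤ g y := by
    intro g hgR y hy
    exact St5.nonneg_on_Bbar H hHyp hEss x₀ g (fun x hx hex => hgR x ⟨hx, hex⟩) y
      (St5.mem_Bbar_of_sameFace hy)
  have hConv : ∀ g : V →L[ℝ] ℝ, (∀ y, SameFace H x₀ y → 0 ≤ g y) → ∀ x ∈ R, 0 ≤ g x := by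
    intro g hgB x hx
    exact St5.nonneg_of_ray g hgB hx.1
  have hsign : ∀ f₁ g : V →L[ℝ] ℝ, DualSameFace H f₁ g →
      A ⊆ closure {g | DualSameFace H f₁ g} → ∀ x ∈ R,
      (0 < f₀ x → 0 < g x) ∧ (f₀ x < 0 → g x < 0) := by
    intro f₁ g hg hsub x hx
    obtain ⟨l, hl, hrk, hxl⟩ := hx.2
    exact St5.dual_sign hg (hsub (St5.dsf_refl f₀)) hl hrk hxl
  set K : Set ((V →L[ℝ] ℝ) ⧸ Submodule.span ℝ A) :=
    {q | (∀ x ∈ R, 0 ≤ f₀ x) ∧ ∀ x ∈ R, f₀ x = 0 → 0 ≤ St5.evQ A x q} with hKdef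
  refine ⟨K, ?_, ?_, ?_, ?_, ?_⟩
  · -- closed
    by_cases hgood : ∀ x ∈ R, 0 ≤ f₀ x
    · have hKeq : K = ⋂ (x : V) (_ : x ∈ R ∧ f₀ x = 0), {q | 0 ≤ St5.evQ A x q} := by
        ext q
        simp only [hKdef, Set.mem_setOf_eq, Set.mem_iInter]
        constructor
        · intro hq x hx
          exact hq.2 x hx.1 hx.2
        · intro hq
          exact ⟨hgood, fun x hx h0 => hq x ⟨hx, h0⟩⟩
      rw [hKeq]
      exact isClosed_iInter fun x => isClosed_iInter fun _ =>
        isClosed_le continuous_const (St5.evQ A x).continuous_of_finiteDimensional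
    · have hKe : K = ∅ := Set.eq_empty_iff_forall_notMem.2 fun q hq => hgood hq.1
      rw [hKe]
      exact isClosed_empty
  · -- convex
    intro p hp q hq a b ha hb hab
    refine ⟨hp.1, fun x hx h0 => ?_⟩
    have h1 := hp.2 x hx h0
    have h2 := hq.2 x hx h0
    have heq : St5.evQ A x (a • p + b • q) = a * St5.evQ A x p + b * St5.evQ A x q := by
      simp [map_add, map_smul, smul_eq_mul]
    rw [heq]
    exact add_nonneg (mul_nonneg ha h1) (mul_nonneg hb h2)
  · -- positive cone
    intro c hc q hq
    refine ⟨hq.1, fun x hx h0 => ?_⟩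
    have heq : St5.evQ A x (c • q) = c * St5.evQ A x q := by
      simp [map_smul, smul_eq_mul]
    rw [heq]
    exact mul_nonneg (le_of_lt hc) (hq.2 x hx h0)
  · -- property (i)
    rintro B' ⟨f₁, rfl⟩ hAB'
    have hBne : f₁ ∈ {g | DualSameFace H f₁ g} := St5.dsf_refl f₁
    constructor
    · rintro hBU q ⟨g, hgB', rfl⟩
      have hgood : ∀ x ∈ R, 0 ≤ f₀ x := by
        intro x hx
        by_contra hneg
        push_neg at hneg
        have hgx : f₁ x < 0 := (hsign f₁ f₁ hBne hAB' x hx).2 hneg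
        obtain ⟨b, hbB, hb⟩ := St5.exists_neg_on_face hx.1 hgx
        have := (hBU hbB) f₁ hBne
        linarith
      refine ⟨hgood, fun x hx h0 => ?_⟩
      rw [hevQmk x hx h0 g]
      exact hConv g (fun y hy => (hBU hy) g hgB') x hx
    · intro hK b hb
      simp only [bigCone, Set.mem_setOf_eq]
      intro g hgB'
      have hq : (Submodule.span ℝ A).mkQ g ∈ K := hK ⟨g, hgB', rfl⟩
      apply hBig g ?_ b hb
      intro x hx
      rcases lt_trichotomy (f₀ x) 0 with hneg | hzero | hpos
      · exact absurd (hq.1 x hx) (not_le.2 hneg)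
      · have := hq.2 x hx hzero
        rwa [hevQmk x hx hzero g] at this
      · exact le_of_lt ((hsign f₁ g hgB' hAB' x hx).1 hpos)
  · -- property (ii)
    constructor
    · intro hKuniv
      have h0K : (0 : (V →L[ℝ] ℝ) ⧸ Submodule.span ℝ A) ∈ K := by
        rw [hKuniv]
        trivial
      have hgood := h0K.1
      intro b hb
      refine Set.mem_iInter₂.2 fun B' hB' => ?_
      obtain ⟨⟨⟨f₁, rfl⟩, hopen⟩, hsub⟩ := hB'
      simp only [bigCone, Set.mem_setOf_eq]
      intro g hgB'
      apply hBig g ?_ b hb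
      intro x hx
      rcases eq_or_ne x 0 with rfl | hx0
      · simp
      have hf₀pos : 0 < f₀ x := by
        rcases (hgood x hx).lt_or_eq with hlt | heq0
        · exact hlt
        exfalso
        obtain ⟨gx, hgx1, hgx2⟩ := exists_dual_vector ℝ x (norm_ne_zero_iff.2 hx0)
        have hmem : (Submodule.span ℝ A).mkQ (-gx) ∈ K := by
          rw [hKuniv]
          trivial
        have hle := hmem.2 x hx heq0.symm
        rw [hevQmk x hx heq0.symm (-gx)] at hle
        have hxn : (0:ℝ) < ‖x‖ := norm_pos_iff.2 hx0
        simp only [ContinuousLinearMap.neg_apply, hgx2] at hle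
        simp at hle
        exact hx0 hle
      exact le_of_lt ((hsign f₁ g hgB' hsub x hx).1 hf₀pos)
    · intro hsmall
      have hpos : ∀ x ∈ R, x ≠ 0 → 0 < f₀ x := by
        intro x hx hx0
        by_contra hc
        push_neg at hc
        obtain ⟨l, hl, hrk, hxl⟩ := hx.2
        obtain ⟨Bf, hch, hsubBf, g, hgBf, hgx⟩ := St5.exists_chamber f₀ hl hrk hxl hx0 hc
        obtain ⟨b, hbB, hb⟩ := St5.exists_neg_on_face hx.1 hgx
        have hbsmall := hsmall hbB
        have hbig := Set.mem_iInter₂.1 hbsmall Bf ⟨hch, hsubBf⟩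
        exact absurd (hbig g hgBf) (not_le.2 hb)
      rw [Set.eq_univ_iff_forall]
      intro q
      obtain ⟨g, rfl⟩ := Submodule.Quotient.mk_surjective (Submodule.span ℝ A) q
      refine ⟨fun x hx => ?_, fun x hx h0 => ?_⟩
      · rcases eq_or_ne x 0 with rfl | hx0
        · simp
        · exact le_of_lt (hpos x hx hx0)
      · have hx00 : x = 0 := by
          by_contra hne
          exact absurd h0 (ne_of_gt (hpos x hx hne))
        subst hx00
        have hev := hevQmk 0 hx h0 g
        rw [show (Submodule.Quotient.mk g : (V →L[ℝ] ℝ) ⧸ Submodule.span ℝ A)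
          = (Submodule.span ℝ A).mkQ g from rfl, hev]
        simp
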